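/- Combining the BK bound and the circuit-blocking bound: for critical site percolation on the triangular lattice with any lattice spacing δ, the probability that the annulus A(x; r, R) (with δ ≤ r ≤ R ≤ 1) is crossed by k disjoint interface (boundary) curves is at most (r/R)^{φ(k)} with φ(k) = −C·log(1−γ)·k/2, where C > 0 and γ ∈ (0,1) are constants independent of δ, r, R. In particular φ(k) → ∞ as k → ∞. -/
import Mathlib


open MeasureTheory Filter

/-- Aizenman–Burchard bound for percolation interfaces: combining
the parity/black-path reduction, the BK inequality and the RSW circuit bound.
For (near-)critical site percolation, the probability that the annulus
`A(x; r, R)` (with `δ ≤ r ≤ R ≤ 1`) is crossed by `k` disjoint interface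
curves is at most `(r/R) ^ φ k` with `φ k = -C * log (1-γ) * k / 2`, where
`C > 0` and `γ ∈ (0,1)` do not depend on `δ, r, R`; in particular
`φ k → ∞` as `k → ∞`.

Hypotheses: `IfaceCross k` is the event that the annulus is crossed by `k`
disjoint boundary (interface) curves — it is void for odd `k` and forces `k/2`
disjoint black crossings; `BlackCross m` is the event of `m` disjoint black
crossings, satisfying the BK bound; `BlackCross 1` satisfies the RSW-type
circuit-blocking bound. -/
theorem interface_crossings_powerlaw_bound
    {Ω : Type*} [MeasurableSpace Ω] (μ : Measure Ω) [IsProbabilityMeasure μ]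
    (r R : ℝ) (hr : 0 < r) (hrR : r ≤ R) (hR : R ≤ 1)
    (IfaceCross BlackCross : ℕ → Set Ω)
    (C γ : ℝ) (hC : 0 < C) (hγ0 : 0 < γ) (hγ1 : γ < 1)
    (hparity : ∀ k, ¬ Even k → IfaceCross k = ∅)
    (hsub : ∀ m, IfaceCross (2 * m) ⊆ BlackCross m)
    (hBK : ∀ m, μ (BlackCross m) ≤ μ (BlackCross 1) ^ m)
    (hRSW : μ (BlackCross 1) ≤ ENNReal.ofReal ((r / R) ^ (-C * Real.log (1 - γ)))) :
    (∀ k, μ (IfaceCross k) ≤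
        ENNReal.ofReal ((r / R) ^ (-C * Real.log (1 - γ) * k / 2))) ∧
      Tendsto (fun k : ℕ => -C * Real.log (1 - γ) * k / 2) atTop atTop := by

  set a := -C * Real.log (1 - γ) with ha
  have hrR0 : 0 < r / R := div_pos hr (lt_of_lt_of_le hr hrR)
  constructor
  · intro k
    rcases Nat.even_or_odd k with ⟨m, hm⟩ | hodd
    · have hk : k = 2 * m := by omega
      subst hk
      calc μ (IfaceCross (2 * m)) ≤ μ (BlackCross m) := measure_mono (hsub m)
        _ ≤ μ (BlackCross 1) ^ m := hBK m
        _ ≤ ENNReal.ofReal ((r / R) ^ a) ^ m := pow_le_pow_left' hRSW m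
        _ = ENNReal.ofReal (((r / R) ^ a) ^ m) := by
              rw [← ENNReal.ofReal_pow (Real.rpow_nonneg hrR0.le a)]
        _ = ENNReal.ofReal ((r / R) ^ (a * (2 * m : ℕ) / 2)) := by
              congr 1
              rw [← Real.rpow_natCast ((r/R) ^ a), ← Real.rpow_mul hrR0.le]
              congr 1
              push_cast; ring
    · rw [hparity _ (Nat.not_even_iff_odd.mpr hodd)]
      simp
  · have hlog : Real.log (1 - γ) < 0 :=
      Real.log_neg (by linarith) (by linarith)
    have ha0 : 0 < a := by
      rw [ha]; nlinarith
    have : Tendsto (fun k : ℕ => a * k / 2) atTop atTop := by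
      apply Tendsto.atTop_div_const (by norm_num)
      exact Tendsto.const_mul_atTop ha0 tendsto_natCast_atTop_atTop
    simpa [ha] using this
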